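/- Let $k$ be a field of characteristic $\neq 2$, and for each $2 \leq i \leq r$ let $g_i(x_i) \in k[x_i]$ be a polynomial of positive degree with $g_i(0)$ a nonzero square in $k$. Then for every $r \geq 2$, the quadratic form $\varphi_r = \langle\langle x_2, \ldots, x_r \rangle\rangle' \perp \langle \prod_{i=2}^r g_i(x_i) \rangle$ is anisotropic over $k(x_2, \ldots, x_r)$. -/
import Mathlib


/-- A diagonal quadratic form (given by its diagonal entries `d`) is anisotropic. -/
def Anisotropic {F : Type*} [Field F] {ι : Type*} [Fintype ι] (d : ι → F) : Prop :=
  ∀ w : ι → F, ∑ i, d i * w i ^ 2 = 0 → w = 0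

noncomputable section

/-- The rational function field `k(x₁, …, x_m)`. -/
abbrev Km (k : Type*) [Field k] (m : ℕ) := FractionRing (MvPolynomial (Fin m) k)

/-- The variable `xᵢ` in `k(x₁, …, x_m)`. -/
def xvar {k : Type*} [Field k] {m : ℕ} (i : Fin m) : Km k m :=
  algebraMap (MvPolynomial (Fin m) k) (Km k m) (MvPolynomial.X i)

open Polynomial in
lemma springer {R : Type*} [CommRing R] [IsDomain R]
    {ι₁ ι₂ : Type*} [Fintype ι₁] [Fintype ι₂]
    (u : ι₁ → Polynomial R) (v : ι₂ → Polynomial R)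
    (Hu : ∀ a : ι₁ → R, ∑ i, (u i).eval 0 * a i ^ 2 = 0 → a = 0)
    (Hv : ∀ a : ι₂ → R, ∑ j, (v j).eval 0 * a j ^ 2 = 0 → a = 0) :
    ∀ w : ι₁ ⊕ ι₂ → Polynomial R,
      (∑ i, u i * (w (.inl i)) ^ 2) + Polynomial.X * (∑ j, v j * (w (.inr j)) ^ 2) = 0 →
      w = 0 := by
  suffices H : ∀ N, ∀ w : ι₁ ⊕ ι₂ → Polynomial R,
      (∑ i, (w i).natDegree) = N →
      (∑ i, u i * (w (.inl i)) ^ 2) + Polynomial.X * (∑ j, v j * (w (.inr j)) ^ 2) = 0 →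
      w = 0 by
    exact fun w hw => H _ w rfl hw
  intro N
  induction N using Nat.strong_induction_on with
  | _ N IH =>
    intro w hN heq
    by_cases hw0 : w = 0
    · exact hw0
    -- Step 1: X ∣ w (inl i)
    have h1 : ∀ i, Polynomial.X ∣ w (.inl i) := by
      have he : ∑ i, (u i).eval 0 * ((w (.inl i)).eval 0) ^ 2 = 0 := by
        have := congrArg (Polynomial.eval 0) heq
        simpa [Polynomial.eval_finset_sum] using this
      have := Hu (fun i => (w (.inl i)).eval 0) he
      intro i
      rw [Polynomial.X_dvd_iff, Polynomial.coeff_zero_eq_eval_zero]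
      exact congrFun this i
    -- Step 2: X ∣ w (inr j)
    have h2 : ∀ j, Polynomial.X ∣ w (.inr j) := by
      choose a ha using h1
      have hA : (∑ i, u i * (w (.inl i)) ^ 2) =
          Polynomial.X ^ 2 * ∑ i, u i * a i ^ 2 := by
        rw [Finset.mul_sum]
        refine Finset.sum_congr rfl fun i _ => ?_
        rw [ha i]; ring
      have hx : Polynomial.X *
          ((Polynomial.X * ∑ i, u i * a i ^ 2) + ∑ j, v j * (w (.inr j)) ^ 2) = 0 := by
        rw [← heq, hA]; ring
      have hx2 : (Polynomial.X * ∑ i, u i * a i ^ 2) + ∑ j, v j * (w (.inr j)) ^ 2 = 0 :=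
        (mul_eq_zero.mp hx).resolve_left Polynomial.X_ne_zero
      have he : ∑ j, (v j).eval 0 * ((w (.inr j)).eval 0) ^ 2 = 0 := by
        have := congrArg (Polynomial.eval 0) hx2
        simpa [Polynomial.eval_finset_sum] using this
      have := Hv (fun j => (w (.inr j)).eval 0) he
      intro j
      rw [Polynomial.X_dvd_iff, Polynomial.coeff_zero_eq_eval_zero]
      exact congrFun this j
    -- Step 3: descent
    have hall : ∀ i, Polynomial.X ∣ w i := by
      intro i; cases i with
      | inl i => exact h1 i
      | inr j => exact h2 j
    choose a ha using hall
    have heq' : (∑ i, u i * (a (.inl i)) ^ 2) +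
        Polynomial.X * (∑ j, v j * (a (.inr j)) ^ 2) = 0 := by
      have : Polynomial.X ^ 2 * ((∑ i, u i * (a (.inl i)) ^ 2) +
          Polynomial.X * (∑ j, v j * (a (.inr j)) ^ 2)) = 0 := by
        rw [← heq]
        rw [Finset.mul_sum, mul_add, Finset.mul_sum]
        congr 1
        · exact Finset.sum_congr rfl fun i _ => by rw [ha (.inl i)]; ring
        · rw [Finset.mul_sum, Finset.mul_sum]
          exact Finset.sum_congr rfl fun j _ => by rw [ha (.inr j)]; ring
      exact (mul_eq_zero.mp this).resolve_left (pow_ne_zero _ Polynomial.X_ne_zero)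
    -- measure decreases
    obtain ⟨i0, hi0⟩ : ∃ i, w i ≠ 0 := by
      by_contra h; push_neg at h; exact hw0 (funext h)
    have ha0 : ∀ i, w i ≠ 0 → a i ≠ 0 := by
      intro i hi hai; exact hi (by rw [ha i, hai, mul_zero])
    have hdege : ∀ i, a i ≠ 0 → (w i).natDegree = (a i).natDegree + 1 := by
      intro i hai
      rw [ha i, Polynomial.natDegree_mul Polynomial.X_ne_zero hai, Polynomial.natDegree_X]
      ring
    have hlt : ∑ i, (a i).natDegree < N := by
      rw [← hN]
      apply Finset.sum_lt_sum
      · intro i _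
        by_cases hai : a i = 0
        · simp [hai]
        · rw [hdege i hai]; omega
      · refine ⟨i0, Finset.mem_univ _, ?_⟩
        have hai0 : a i0 ≠ 0 := ha0 i0 hi0
        rw [hdege i0 hai0]; omega
    have := IH _ hlt a rfl heq'
    funext i
    rw [ha i, show a i = 0 from congrFun this i, mul_zero]
    rfl
/-- Subsets of `Fin (m+1)`: those not containing 0 (inl) and those containing 0 (inr),
each identified with a subset of `Fin m` via `Fin.succ`. -/
noncomputable def insEquiv (m : ℕ) : Finset (Fin m) ⊕ Finset (Fin m) ≃ Finset (Fin (m + 1)) where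
  toFun := Sum.elim (fun T => T.map (Fin.succEmb m))
    (fun T => insert 0 (T.map (Fin.succEmb m)))
  invFun S :=
    if (0 : Fin (m + 1)) ∈ S then .inr (S.preimage Fin.succ (Fin.succ_injective m).injOn)
    else .inl (S.preimage Fin.succ (Fin.succ_injective m).injOn)
  left_inv := by
    rintro (T | T) <;> dsimp only [Sum.elim_inl, Sum.elim_inr]
    · rw [if_neg]
      · congr 1
        ext i
        simp [Finset.mem_preimage, Fin.succEmb]
      · simp [Fin.succEmb, Fin.succ_ne_zero, eq_comm]
    · rw [if_pos (Finset.mem_insert_self _ _)]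
      congr 1
      ext i
      simp [Finset.mem_preimage, Fin.succEmb, Fin.succ_ne_zero]
  right_inv := by
    intro S
    dsimp only
    by_cases h0 : (0 : Fin (m + 1)) ∈ S
    · rw [if_pos h0]
      dsimp only [Sum.elim_inr]
      ext j
      refine Fin.cases ?_ ?_ j
      · simp [h0]
      · intro i
        simp [Finset.mem_preimage, Fin.succEmb, Fin.succ_ne_zero]
    · rw [if_neg h0]
      dsimp only [Sum.elim_inl]
      ext j
      refine Fin.cases ?_ ?_ j
      · simp [h0, Fin.succEmb, Fin.succ_ne_zero, eq_comm]
      · intro i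
        simp [Finset.mem_preimage, Fin.succEmb]

@[simp] lemma insEquiv_inl (m : ℕ) (T : Finset (Fin m)) :
    insEquiv m (.inl T) = T.map (Fin.succEmb m) := rfl
@[simp] lemma insEquiv_inr (m : ℕ) (T : Finset (Fin m)) :
    insEquiv m (.inr T) = insert 0 (T.map (Fin.succEmb m)) := rfl

lemma zero_notMem_map (m : ℕ) (T : Finset (Fin m)) :
    (0 : Fin (m+1)) ∉ T.map (Fin.succEmb m) := by
  simp [Fin.succEmb, Fin.succ_ne_zero, eq_comm]

lemma map_ne_empty {m : ℕ} {T : Finset (Fin m)} (h : T ≠ ∅) :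
    T.map (Fin.succEmb m) ≠ ∅ := by
  simpa using h

/-- Nonempty subsets of `Fin (m+1)` plus a unit, decomposed. -/
noncomputable def insEquiv' (m : ℕ) :
    ({T : Finset (Fin m) // T ≠ ∅} ⊕ Unit) ⊕ Finset (Fin m) ≃
      {S : Finset (Fin (m+1)) // S ≠ ∅} ⊕ Unit where
  toFun x := match x with
    | .inl (.inl ⟨T, h⟩) => .inl ⟨T.map (Fin.succEmb m), map_ne_empty h⟩
    | .inl (.inr _) => .inr ()
    | .inr T => .inl ⟨insert 0 (T.map (Fin.succEmb m)), Finset.insert_ne_empty _ _⟩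
  invFun x := match x with
    | .inr _ => .inl (.inr ())
    | .inl ⟨S, h⟩ =>
      if h0 : (0 : Fin (m + 1)) ∈ S then .inr (S.preimage Fin.succ (Fin.succ_injective m).injOn)
      else .inl (.inl ⟨S.preimage Fin.succ (Fin.succ_injective m).injOn, by
        intro hemp
        apply h
        ext j
        simp only [Finset.notMem_empty, iff_false]
        intro hj
        rcases Fin.eq_zero_or_eq_succ j with rfl | ⟨i, rfl⟩
        · exact h0 hj
        · have : i ∈ S.preimage Fin.succ (Fin.succ_injective m).injOn :=
            Finset.mem_preimage.mpr hj
          rw [hemp] at this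
          simp at this⟩)
  left_inv := by
    rintro ((⟨T, h⟩ | u) | T)
    · simp only
      rw [dif_neg (zero_notMem_map m T)]
      congr 2
      ext i
      simp [Finset.mem_preimage, Fin.succEmb]
    · rfl
    · simp only
      rw [dif_pos (Finset.mem_insert_self _ _)]
      congr 1
      ext i
      simp [Finset.mem_preimage, Fin.succEmb, Fin.succ_ne_zero]
  right_inv := by
    rintro (⟨S, h⟩ | u)
    · simp only
      by_cases h0 : (0 : Fin (m + 1)) ∈ S
      · rw [dif_pos h0]
        simp only
        congr 1
        ext j
        refine Fin.cases ?_ ?_ j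
        · simp [h0]
        · intro i
          simp [Finset.mem_preimage, Fin.succEmb, Fin.succ_ne_zero]
      · rw [dif_neg h0]
        simp only
        congr 1
        ext j
        refine Fin.cases ?_ ?_ j
        · simp [h0, Fin.succEmb, Fin.succ_ne_zero, eq_comm]
        · intro i
          simp [Finset.mem_preimage, Fin.succEmb]
    · rfl

open MvPolynomial in
lemma full_pfister (k : Type*) [Field k] :
    ∀ m, ∀ w : Finset (Fin m) → MvPolynomial (Fin m) k,
      ∑ S, (∏ i ∈ S, MvPolynomial.X i) * w S ^ 2 = 0 → w = 0 := by
  intro m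
  induction m with
  | zero =>
    intro w hw
    have huniv : (Finset.univ : Finset (Finset (Fin 0))) = {∅} := by decide
    rw [huniv, Finset.sum_singleton, Finset.prod_empty, one_mul] at hw
    have hz : w ∅ = 0 := pow_eq_zero_iff (n := 2) (by norm_num) |>.mp hw
    funext S
    rw [Subsingleton.elim S ∅, hz]; rfl
  | succ m IHm =>
    intro w hw
    set φ := MvPolynomial.finSuccEquiv k m with hφ
    have hCprod : ∀ T : Finset (Fin m),
        φ (∏ i ∈ T.map (Fin.succEmb m), (X i : MvPolynomial (Fin (m+1)) k))
          = Polynomial.C (∏ i ∈ T, (X i : MvPolynomial (Fin m) k)) := by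
      intro T
      rw [Finset.prod_map, map_prod, map_prod]
      refine Finset.prod_congr rfl fun i _ => ?_
      exact MvPolynomial.finSuccEquiv_X_succ
    have h0 : ∑ S, φ ((∏ i ∈ S, X i) * w S ^ 2) = 0 := by
      rw [← map_sum, hw, map_zero]
    have e2 : ∑ t : Finset (Fin m) ⊕ Finset (Fin m),
        Sum.elim
          (fun T => Polynomial.C (∏ i ∈ T, (X i : MvPolynomial (Fin m) k))
            * (φ (w (insEquiv m (.inl T)))) ^ 2)
          (fun T => Polynomial.X * (Polynomial.C (∏ i ∈ T, (X i : MvPolynomial (Fin m) k))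
            * (φ (w (insEquiv m (.inr T)))) ^ 2)) t
        = ∑ S, φ ((∏ i ∈ S, X i) * w S ^ 2) := by
      refine Fintype.sum_equiv (insEquiv m) _ _ ?_
      rintro (T | T)
      · simp only [Sum.elim_inl]
        rw [map_mul, map_pow, insEquiv_inl, hCprod T]
      · simp only [Sum.elim_inr]
        rw [map_mul, map_pow, insEquiv_inr, Finset.prod_insert (zero_notMem_map m T),
          map_mul, MvPolynomial.finSuccEquiv_X_zero, hCprod T, mul_assoc]
    rw [Fintype.sum_sum_type] at e2
    simp only [Sum.elim_inl, Sum.elim_inr] at e2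
    have key' : (∑ T, Polynomial.C (∏ i ∈ T, (X i : MvPolynomial (Fin m) k))
          * ((fun t => φ (w (insEquiv m t))) (Sum.inl T)) ^ 2)
        + Polynomial.X * (∑ T, Polynomial.C (∏ i ∈ T, (X i : MvPolynomial (Fin m) k))
          * ((fun t => φ (w (insEquiv m t))) (Sum.inr T)) ^ 2) = 0 := by
      dsimp only
      rw [Finset.mul_sum, e2]
      exact h0
    have hres : ∀ a : Finset (Fin m) → MvPolynomial (Fin m) k,
        ∑ T, (Polynomial.C (∏ i ∈ T, (X i : MvPolynomial (Fin m) k))).eval 0 * a T ^ 2 = 0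
          → a = 0 := by
      intro a ha
      simp only [Polynomial.eval_C] at ha
      exact IHm a ha
    have hW0 : (fun t => φ (w (insEquiv m t))) = 0 := springer _ _ hres hres _ key'
    funext S
    have h2 := congrFun hW0 ((insEquiv m).symm S)
    simp only [Equiv.apply_symm_apply, Pi.zero_apply] at h2
    exact φ.injective (h2.trans (map_zero φ).symm)

instance instIsEmptyNonemptySubsets : IsEmpty {S : Finset (Fin 0) // S ≠ ∅} :=
  ⟨fun ⟨S, h⟩ => h (Subsingleton.elim _ _)⟩

open MvPolynomial in
lemma mix_pfister (k : Type*) [Field k] :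
    ∀ m (g : Fin m → Polynomial k) (c : Fin m → k), (∀ i, c i ≠ 0) →
      (∀ i, (g i).eval 0 = c i ^ 2) →
      ∀ w : ({S : Finset (Fin m) // S ≠ ∅} ⊕ Unit) → MvPolynomial (Fin m) k,
        (∑ S : {S : Finset (Fin m) // S ≠ ∅}, (∏ i ∈ S.1, X i) * w (.inl S) ^ 2)
          + (∏ i, Polynomial.aeval (X i) (g i)) * w (.inr ()) ^ 2 = 0 → w = 0 := by
  intro m
  induction m with
  | zero =>
    intro g c hc hgc w hw
    rw [Finset.univ_eq_empty (α := {S : Finset (Fin 0) // S ≠ ∅}), Finset.sum_empty,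
      Finset.univ_eq_empty (α := Fin 0), Finset.prod_empty, zero_add, one_mul] at hw
    have hz : w (.inr ()) = 0 := pow_eq_zero_iff (n := 2) (by norm_num) |>.mp hw
    funext x
    rcases x with s | u
    · exact isEmptyElim s
    · rw [hz]; rfl
  | succ m IHm =>
    intro g c hc hgc w hw
    set φ := MvPolynomial.finSuccEquiv k m with hφ
    have hCprod : ∀ T : Finset (Fin m),
        φ (∏ i ∈ T.map (Fin.succEmb m), (X i : MvPolynomial (Fin (m+1)) k))
          = Polynomial.C (∏ i ∈ T, (X i : MvPolynomial (Fin m) k)) := by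
      intro T
      rw [Finset.prod_map, map_prod, map_prod]
      refine Finset.prod_congr rfl fun i _ => ?_
      exact MvPolynomial.finSuccEquiv_X_succ
    set G' : MvPolynomial (Fin m) k := ∏ i, Polynomial.aeval (X i) (g i.succ) with hG'
    set A : Polynomial (MvPolynomial (Fin m) k) :=
      (g 0).map (algebraMap k (MvPolynomial (Fin m) k)) with hA
    -- φ of the product entry
    have hφG : φ (∏ i, Polynomial.aeval (X i) (g i)) = A * Polynomial.C G' := by
      rw [Fin.prod_univ_succ, map_mul]
      congr 1
      · rw [← Polynomial.aeval_algHom_apply φ, MvPolynomial.finSuccEquiv_X_zero]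
        have h := Polynomial.algHom_ext (R := k)
          (f := Polynomial.aeval (Polynomial.X : Polynomial (MvPolynomial (Fin m) k)))
          (g := Polynomial.mapAlgHom (Algebra.ofId k (MvPolynomial (Fin m) k))) (by simp)
        have := DFunLike.congr_fun h (g 0)
        rw [this, hA]
        simp only [Polynomial.mapAlgHom, AlgHom.coe_mk, RingHom.coe_coe]
        rfl
      · rw [map_prod, hG', map_prod]
        refine Finset.prod_congr rfl fun i _ => ?_
        rw [← Polynomial.aeval_algHom_apply φ, MvPolynomial.finSuccEquiv_X_succ]
        exact Polynomial.aeval_algHom_apply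
          (Polynomial.CAlgHom (R := k) (A := MvPolynomial (Fin m) k)) (X i) (g i.succ)
    have hevalA : A.eval 0 = MvPolynomial.C ((c 0) ^ 2) := by
      rw [hA, Polynomial.eval_zero_map, ← hgc 0, MvPolynomial.algebraMap_eq]
    -- the springer data
    set u : ({T : Finset (Fin m) // T ≠ ∅} ⊕ Unit) → Polynomial (MvPolynomial (Fin m) k) :=
      Sum.elim (fun T => Polynomial.C (∏ i ∈ T.1, (X i : MvPolynomial (Fin m) k)))
        (fun _ => A * Polynomial.C G') with hu
    set v : Finset (Fin m) → Polynomial (MvPolynomial (Fin m) k) :=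
      fun T => Polynomial.C (∏ i ∈ T, (X i : MvPolynomial (Fin m) k)) with hv
    -- the original equation as a single sum over the sum type
    have hw' : ∑ x : {S : Finset (Fin (m+1)) // S ≠ ∅} ⊕ Unit,
        Sum.elim (fun S : {S : Finset (Fin (m+1)) // S ≠ ∅} => (∏ i ∈ S.1, X i) * w (.inl S) ^ 2)
          (fun _ : Unit => (∏ i, Polynomial.aeval (X i) (g i)) * w (.inr ()) ^ 2) x = 0 := by
      rw [Fintype.sum_sum_type]
      simpa using hw
    have h0 : ∑ x : {S : Finset (Fin (m+1)) // S ≠ ∅} ⊕ Unit,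
        φ (Sum.elim (fun S : {S : Finset (Fin (m+1)) // S ≠ ∅} => (∏ i ∈ S.1, X i) * w (.inl S) ^ 2)
          (fun _ : Unit => (∏ i, Polynomial.aeval (X i) (g i)) * w (.inr ()) ^ 2) x) = 0 := by
      rw [← map_sum, hw', map_zero]
    have e2 : ∑ t : ({T : Finset (Fin m) // T ≠ ∅} ⊕ Unit) ⊕ Finset (Fin m),
        Sum.elim
          (fun t1 => u t1 * (φ (w (insEquiv' m (.inl t1)))) ^ 2)
          (fun T => Polynomial.X * (v T * (φ (w (insEquiv' m (.inr T)))) ^ 2)) t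
        = ∑ x : {S : Finset (Fin (m+1)) // S ≠ ∅} ⊕ Unit,
          φ (Sum.elim (fun S : {S : Finset (Fin (m+1)) // S ≠ ∅} => (∏ i ∈ S.1, X i) * w (.inl S) ^ 2)
            (fun _ : Unit => (∏ i, Polynomial.aeval (X i) (g i)) * w (.inr ()) ^ 2) x) := by
      refine Fintype.sum_equiv (insEquiv' m) _ _ ?_
      rintro ((⟨T, hT⟩ | u0) | T)
      · show Polynomial.C (∏ i ∈ T, (X i : MvPolynomial (Fin m) k)) * _ ^ 2 = _
        have : insEquiv' m (.inl (.inl ⟨T, hT⟩)) = .inl ⟨T.map (Fin.succEmb m), map_ne_empty hT⟩ := rfl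
        rw [this]
        show _ = φ ((∏ i ∈ T.map (Fin.succEmb m), X i) * w (.inl ⟨T.map (Fin.succEmb m), map_ne_empty hT⟩) ^ 2)
        rw [map_mul, map_pow, hCprod T]
      · show (A * Polynomial.C G') * _ ^ 2 = _
        have : insEquiv' m (.inl (.inr u0)) = .inr () := rfl
        rw [this]
        show _ = φ ((∏ i, Polynomial.aeval (X i) (g i)) * w (.inr ()) ^ 2)
        rw [map_mul, map_pow, hφG]
      · show Polynomial.X * (Polynomial.C (∏ i ∈ T, (X i : MvPolynomial (Fin m) k)) * _ ^ 2) = _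
        have : insEquiv' m (.inr T) = .inl ⟨insert 0 (T.map (Fin.succEmb m)), Finset.insert_ne_empty _ _⟩ := rfl
        rw [this]
        show _ = φ ((∏ i ∈ insert 0 (T.map (Fin.succEmb m)), X i) * w _ ^ 2)
        rw [map_mul, map_pow, Finset.prod_insert (zero_notMem_map m T), map_mul,
          MvPolynomial.finSuccEquiv_X_zero, hCprod T, mul_assoc]
    rw [Fintype.sum_sum_type] at e2
    simp only [Sum.elim_inl, Sum.elim_inr] at e2
    have key' : (∑ t1 : {T : Finset (Fin m) // T ≠ ∅} ⊕ Unit,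
          u t1 * ((fun t => φ (w (insEquiv' m t))) (Sum.inl t1)) ^ 2)
        + Polynomial.X * (∑ T : Finset (Fin m),
          v T * ((fun t => φ (w (insEquiv' m t))) (Sum.inr T)) ^ 2) = 0 := by
      dsimp only
      rw [Finset.mul_sum, e2]
      exact h0
    -- residue hypotheses
    have hresu : ∀ a : {T : Finset (Fin m) // T ≠ ∅} ⊕ Unit → MvPolynomial (Fin m) k,
        ∑ t1, (u t1).eval 0 * a t1 ^ 2 = 0 → a = 0 := by
      intro a ha
      rw [Fintype.sum_sum_type] at ha
      simp only [hu, Sum.elim_inl, Sum.elim_inr, Polynomial.eval_C, Polynomial.eval_mul,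
        hevalA, Fintype.sum_unique] at ha
      have ha2 : (∑ T : {T : Finset (Fin m) // T ≠ ∅}, (∏ i ∈ T.1, X i) *
            (Sum.elim (fun T : {T : Finset (Fin m) // T ≠ ∅} => a (.inl T))
              (fun _ : Unit => MvPolynomial.C (c 0) * a (.inr ())) (.inl T)) ^ 2)
          + (∏ i, Polynomial.aeval (X i) (g i.succ)) *
            (Sum.elim (fun T : {T : Finset (Fin m) // T ≠ ∅} => a (.inl T))
              (fun _ : Unit => MvPolynomial.C (c 0) * a (.inr ())) (.inr ())) ^ 2 = 0 := by
        simp only [Sum.elim_inl, Sum.elim_inr]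
        rw [← hG', ← ha]
        congr 1
        rw [mul_pow, map_pow]
        ring
      have := IHm (fun i => g i.succ) (fun i => c i.succ) (fun i => hc i.succ)
        (fun i => hgc i.succ) _ ha2
      funext x
      rcases x with T | u0
      · exact congrFun this (.inl T)
      · have h1 := congrFun this (.inr ())
        simp only [Sum.elim_inr, Pi.zero_apply] at h1
        rcases mul_eq_zero.mp h1 with h2 | h2
        · exact absurd (by simpa using h2) (hc 0)
        · rw [show u0 = () from rfl, h2]; rfl
    have hresv : ∀ a : Finset (Fin m) → MvPolynomial (Fin m) k,
        ∑ T, (v T).eval 0 * a T ^ 2 = 0 → a = 0 := by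
      intro a ha
      simp only [hv, Polynomial.eval_C] at ha
      exact full_pfister k m a ha
    have hW0 : (fun t => φ (w (insEquiv' m t))) = 0 := springer u v hresu hresv _ key'
    funext x
    have h2 := congrFun hW0 ((insEquiv' m).symm x)
    simp only [Equiv.apply_symm_apply, Pi.zero_apply] at h2
    exact φ.injective (h2.trans (map_zero φ).symm)


/-- let `k` have characteristic `≠ 2`, and for each of the `m = r - 1 ≥ 1`
variables (here relabelled `x₂, …, x_r` as `Fin m`) let `gᵢ ∈ k[xᵢ]` have positive degree
with `gᵢ(0)` a nonzero square in `k`.  Then the form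
`φ_r = ⟨⟨x₂, …, x_r⟩⟩' ⊥ ⟨∏ᵢ gᵢ(xᵢ)⟩`, whose diagonal entries are `∏_{i ∈ S} xᵢ` for the
nonempty subsets `S` (the pure subform of the Pfister form) together with the entry
`∏ᵢ gᵢ(xᵢ)`, is anisotropic over `k(x₂, …, x_r)`. -/
theorem pure_pfister_with_product_entry_anisotropic
    {k : Type*} [Field k] (hk : (2 : k) ≠ 0) (m : ℕ) (hm : 1 ≤ m)
    (g : Fin m → Polynomial k)
    (hdeg : ∀ i, 0 < (g i).natDegree)
    (hsq : ∀ i, ∃ c : k, c ≠ 0 ∧ (g i).eval 0 = c ^ 2) :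
    Anisotropic (Sum.elim
      (fun S : {S : Finset (Fin m) // S ≠ ∅} => ∏ i ∈ S.1, xvar (k := k) i)
      (fun _ : Unit => ∏ i, algebraMap (MvPolynomial (Fin m) k) (Km k m)
        (Polynomial.aeval (MvPolynomial.X i : MvPolynomial (Fin m) k) (g i)))) := by
  classical
  intro w hw
  choose c hc hgc using hsq
  set R := MvPolynomial (Fin m) k with hR
  set D : {S : Finset (Fin m) // S ≠ ∅} ⊕ Unit → MvPolynomial (Fin m) k :=
    Sum.elim (fun S => ∏ i ∈ S.1, MvPolynomial.X i)
      (fun _ => ∏ i, Polynomial.aeval (MvPolynomial.X i) (g i)) with hD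
  have hDmap : ∀ x, Sum.elim
      (fun S : {S : Finset (Fin m) // S ≠ ∅} => ∏ i ∈ S.1, xvar (k := k) i)
      (fun _ : Unit => ∏ i, algebraMap (MvPolynomial (Fin m) k) (Km k m)
        (Polynomial.aeval (MvPolynomial.X i : MvPolynomial (Fin m) k) (g i))) x
      = algebraMap (MvPolynomial (Fin m) k) (Km k m) (D x) := by
    rintro (S | u)
    · simp only [Sum.elim_inl, hD, map_prod, xvar]
    · simp only [Sum.elim_inr, hD, map_prod]
  obtain ⟨b, hb⟩ := IsLocalization.exist_integer_multiples
    (nonZeroDivisors (MvPolynomial (Fin m) k)) Finset.univ w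
  have hb' := fun x => hb x (Finset.mem_univ x)
  simp only [IsLocalization.IsInteger, RingHom.mem_rangeS] at hb'
  choose W hW using hb'
  have hbne : algebraMap (MvPolynomial (Fin m) k) (Km k m) (b : MvPolynomial (Fin m) k) ≠ 0 :=
    IsFractionRing.to_map_ne_zero_of_mem_nonZeroDivisors b.2
  have hsum : ∑ x, D x * W x ^ 2 = 0 := by
    apply IsFractionRing.injective (MvPolynomial (Fin m) k) (Km k m)
    rw [map_sum, map_zero]
    have : ∀ x, algebraMap (MvPolynomial (Fin m) k) (Km k m) (D x * W x ^ 2)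
        = algebraMap (MvPolynomial (Fin m) k) (Km k m) (b : MvPolynomial (Fin m) k) ^ 2 *
          (Sum.elim
            (fun S : {S : Finset (Fin m) // S ≠ ∅} => ∏ i ∈ S.1, xvar (k := k) i)
            (fun _ : Unit => ∏ i, algebraMap (MvPolynomial (Fin m) k) (Km k m)
              (Polynomial.aeval (MvPolynomial.X i : MvPolynomial (Fin m) k) (g i))) x
            * w x ^ 2) := by
      intro x
      rw [map_mul, map_pow, hW x, Algebra.smul_def, hDmap x]
      ring
    rw [Finset.sum_congr rfl fun x _ => this x, ← Finset.mul_sum, hw, mul_zero]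
  rw [Fintype.sum_sum_type] at hsum
  simp only [hD, Sum.elim_inl, Sum.elim_inr, Fintype.sum_unique] at hsum
  have hW0 : W = 0 := mix_pfister k m g c hc hgc W hsum
  funext x
  have h1 : (b : MvPolynomial (Fin m) k) • w x = 0 := by
    rw [← hW x, show W x = 0 from congrFun hW0 x, map_zero]
  rw [Algebra.smul_def] at h1
  have := mul_eq_zero.mp h1
  rcases this with h2 | h2
  · exact absurd h2 hbne
  · rw [h2]; rfl

end
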